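/- Let (λ_1,...,λ_m) be the unique solution of the system Σ_{(b_k,...,b_1)∈Ξ_k} ∏_j λ_j^{b_j}/b_j! = 1 for k = 1,...,m. Then for every k ∈ {1,...,m}, the sum over all vectors (b_k,...,b_1) ∈ Ξ_k^+ of ∏_j λ_j^{b_j}/b_j! equals 1, where Ξ_k^+ = {(b_k,...,b_1) ∈ Ξ̂_k : b_k + ... + b_1 = k}. -/

import Mathlib

open Finset

/-- `sumFrom b k'` is `b_k + b_{k-1} + ⋯ + b_{k'}`, where the `Fin k`-index `j`
encodes the subscript `j+1` (so `b ⟨0,_⟩ = b₁`, …, `b ⟨k-1,_⟩ = b_k`). -/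
def sumFrom {k : ℕ} (b : Fin k → ℕ) (k' : ℕ) : ℕ :=
  ∑ ℓ : Fin k, if k' ≤ ℓ.val + 1 then b ℓ else 0

/-- The set `Ξ̂_k` of non-negative integer vectors `(b_k, …, b_1)` with
`b_k + ⋯ + b_{k'} + k' ≤ k + 1` for all `1 ≤ k' ≤ k` and total sum at least `1`. -/
def XiHat (k : ℕ) : Set (Fin k → ℕ) :=
  {b | (∀ k', 1 ≤ k' → k' ≤ k → sumFrom b k' + k' ≤ k + 1) ∧ 1 ≤ ∑ ℓ, b ℓ}

/-- `Ξ_k`: vectors of `Ξ̂_k` having no proper left truncated subvector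
`(b_{k'}, …, b_1)` in `Ξ̂_{k'}` for any `k' < k`. -/
def Xi (k : ℕ) : Set (Fin k → ℕ) :=
  {b | b ∈ XiHat k ∧
    ∀ k' (h : k' < k), (fun j : Fin k' => b (Fin.castLE h.le j)) ∉ XiHat k'}

/-- The equality system `∑_{(b_k,…,b_1) ∈ Ξ_k} ∏_j λ_j^{b_j}/b_j! = 1` for `k = 1, …, m`. -/
def eqSystem (m : ℕ) (lam : ℕ → ℝ) : Prop :=
  ∀ k, 1 ≤ k → k ≤ m →
    ∑ᶠ b ∈ Xi k, ∏ j : Fin k, lam (j.val + 1) ^ (b j) / (Nat.factorial (b j)) = 1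

/-- `Ξ_k⁺`: vectors of `Ξ̂_k` with total sum exactly `k`. -/
def XiPlus (k : ℕ) : Set (Fin k → ℕ) :=
  {b | b ∈ XiHat k ∧ ∑ j, b j = k}

section lems
variable {k : ℕ} (b : Fin k → ℕ)

lemma sumFrom_one : sumFrom b 1 = ∑ ℓ, b ℓ := by
  unfold sumFrom; exact Finset.sum_congr rfl (by intro i _; simp)

lemma sumFrom_anti {k1 k2 : ℕ} (h : k1 ≤ k2) : sumFrom b k2 ≤ sumFrom b k1 := by
  unfold sumFrom; apply Finset.sum_le_sum; intro i _
  split_ifs with h1 h2 <;> omega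

lemma sumFrom_of_gt {k' : ℕ} (h : k < k') : sumFrom b k' = 0 := by
  unfold sumFrom; apply Finset.sum_eq_zero; intro i _
  have := i.isLt; rw [if_neg (by omega)]

lemma sumFrom_le_total (k' : ℕ) : sumFrom b k' ≤ ∑ ℓ, b ℓ := by
  unfold sumFrom; apply Finset.sum_le_sum; intro i _
  split_ifs <;> simp

lemma sumFrom_succ (i : ℕ) (h : i < k) :
    sumFrom b (i + 1) = b ⟨i, h⟩ + sumFrom b (i + 2) := by
  unfold sumFrom
  have hb : b ⟨i, h⟩ = ∑ ℓ : Fin k, if ℓ = ⟨i, h⟩ then b ℓ else 0 := by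
    rw [Finset.sum_ite_eq' Finset.univ (⟨i, h⟩ : Fin k) b]; simp
  rw [hb, ← Finset.sum_add_distrib]
  apply Finset.sum_congr rfl
  intro ℓ _
  rcases eq_or_ne ℓ (⟨i, h⟩ : Fin k) with rfl | hne
  · simp
  · have : ℓ.val ≠ i := by intro hv; exact hne (Fin.ext hv)
    split_ifs <;> simp_all <;> omega
end lems

lemma sumFrom_trunc {k k' : ℕ} (h : k' ≤ k) (b : Fin k → ℕ) {j : ℕ} (hj : j ≤ k' + 1) :
    sumFrom (fun i : Fin k' => b (Fin.castLE h i)) j + sumFrom b (k' + 1) = sumFrom b j := by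
  have step1 : sumFrom b j =
      (∑ ℓ : Fin k, if j ≤ ℓ.val + 1 ∧ ℓ.val < k' then b ℓ else 0) + sumFrom b (k' + 1) := by
    unfold sumFrom
    rw [← Finset.sum_add_distrib]
    apply Finset.sum_congr rfl
    intro ℓ _
    split_ifs <;> omega
  rw [step1]
  congr 1
  rcases Nat.eq_zero_or_pos k' with rfl | hk'
  · simp [sumFrom]
  · unfold sumFrom
    have hre : ∀ ℓ : Fin k, (if j ≤ ℓ.val + 1 ∧ ℓ.val < k' then b ℓ else 0)
        = if ℓ.val < k' then (if j ≤ ℓ.val + 1 then b ℓ else 0) else 0 := by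
      intro ℓ; split_ifs <;> omega
    rw [Finset.sum_congr rfl (fun ℓ _ => hre ℓ)]
    conv_rhs => rw [← Finset.sum_filter]
    apply Finset.sum_nbij' (i := fun i : Fin k' => Fin.castLE h i)
      (j := fun ℓ : Fin k => (⟨min ℓ.val (k' - 1), by omega⟩ : Fin k'))
    · intro a _; simp only [Finset.mem_filter, Finset.mem_univ, true_and, Fin.coe_castLE]
      exact a.isLt
    · intro a _; exact Finset.mem_univ _
    · intro a _; apply Fin.ext; have := a.isLt; simp [Fin.castLE]; omega
    · intro a ha; simp only [Finset.mem_filter, Finset.mem_univ, true_and] at ha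
      apply Fin.ext; simp [Fin.castLE]; omega
    · intro a _; rfl

lemma exists_last_argmax (s : Finset ℕ) (hs : s.Nonempty) (f : ℕ → ℕ) :
    ∃ q ∈ s, (∀ i ∈ s, f i ≤ f q) ∧ ∀ i ∈ s, q < i → f i < f q := by
  classical
  set t := s.filter (fun i => ∀ i' ∈ s, f i' ≤ f i) with ht
  have htne : t.Nonempty := by
    obtain ⟨a, ha, hmax⟩ := s.exists_max_image f hs
    exact ⟨a, Finset.mem_filter.2 ⟨ha, hmax⟩⟩
  set q := t.max' htne with hq
  have hqt : q ∈ t := t.max'_mem htne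
  rw [ht, Finset.mem_filter] at hqt
  refine ⟨q, hqt.1, hqt.2, ?_⟩
  intro i hi hqi
  by_cases hit : i ∈ t
  · exact absurd (Finset.le_max' t i hit) (by omega)
  · rw [ht, Finset.mem_filter] at hit
    push_neg at hit
    obtain ⟨i', hi', hfi⟩ := hit hi
    exact lt_of_lt_of_le hfi (hqt.2 i' hi')

/-- The structural description of `Xi k`: an element is a "primitive top block",
zero-padded below. -/
lemma Xi_iff_struct {k : ℕ} (x : Fin k → ℕ) :
    x ∈ Xi k ↔ (1 ≤ ∑ j, x j ∧ ∑ j, x j ≤ k ∧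
      (∀ j : Fin k, j.val + 1 + ∑ j', x j' ≤ k → x j = 0) ∧
      (∀ k', k + 2 ≤ k' + ∑ j, x j → k' ≤ k → sumFrom x k' + k' ≤ k)) := by
  constructor
  · rintro ⟨⟨hA, hB⟩, hT⟩
    have hk : 1 ≤ k := by
      by_contra hk0
      interval_cases k
      · simp at hB
    have ht0k : ∑ j, x j ≤ k := by
      have := hA 1 le_rfl hk
      rw [sumFrom_one] at this; omega
    refine ⟨hB, ht0k, ?_, ?_⟩
    · -- zeros below the block
      intro j hj
      by_contra hxj
      have hxj1 : 1 ≤ x j := Nat.pos_of_ne_zero hxj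
      obtain ⟨q, hq, hqmax, hqlast⟩ :=
        exists_last_argmax (Finset.Icc 1 k) ⟨1, by simp [hk]⟩ (fun i => sumFrom x i + i)
      simp only [Finset.mem_Icc] at hq
      have hqjj : j.val + 1 + 1 ≤ q := by
        by_contra hle
        have hqk : q < k := by omega
        have h1 : sumFrom x k + k < sumFrom x q + q :=
          hqlast k (by simp [hk]) hqk
        have h2 : sumFrom x q + q ≤ k + 1 := hA q hq.1 hq.2
        have h3 : sumFrom x q ≤ ∑ ℓ, x ℓ := sumFrom_le_total x q
        omega
      have hKlt : q - 1 < k := by omega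
      apply hT (q - 1) hKlt
      constructor
      · intro i hi1 hi2
        have hid : sumFrom (fun j : Fin (q-1) => x (Fin.castLE hKlt.le j)) i
            + sumFrom x (q - 1 + 1) = sumFrom x i := sumFrom_trunc hKlt.le x (by omega)
        rw [show q - 1 + 1 = q by omega] at hid
        have := hqmax i (by simp; omega)
        omega
      · rw [← sumFrom_one]
        have hid : sumFrom (fun j : Fin (q-1) => x (Fin.castLE hKlt.le j)) 1
            + sumFrom x (q - 1 + 1) = sumFrom x 1 := sumFrom_trunc hKlt.le x (by omega)
        rw [show q - 1 + 1 = q by omega] at hid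
        have hanti : sumFrom x q ≤ sumFrom x (j.val + 2) := sumFrom_anti x (by omega)
        have hsucc : sumFrom x (j.val + 1) = x ⟨j.val, j.isLt⟩ + sumFrom x (j.val + 2) :=
          sumFrom_succ x j.val j.isLt
        have hje : x ⟨j.val, j.isLt⟩ = x j := rfl
        rw [hje] at hsucc
        have hle : sumFrom x (j.val + 1) ≤ ∑ ℓ, x ℓ := sumFrom_le_total x _
        have hx1 : sumFrom x 1 = ∑ ℓ, x ℓ := sumFrom_one x
        omega
    · -- upper bound strictly inside the block
      intro k' hk' hk'k
      by_contra hcon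
      have hk'2 : 2 ≤ k' := by omega
      have hup : sumFrom x k' + k' ≤ k + 1 := hA k' (by omega) hk'k
      have heq : sumFrom x k' + k' = k + 1 := by omega
      have hKlt : k' - 1 < k := by omega
      apply hT (k' - 1) hKlt
      constructor
      · intro i hi1 hi2
        have hid : sumFrom (fun j : Fin (k'-1) => x (Fin.castLE hKlt.le j)) i
            + sumFrom x (k' - 1 + 1) = sumFrom x i := sumFrom_trunc hKlt.le x (by omega)
        rw [show k' - 1 + 1 = k' by omega] at hid
        have := hA i hi1 (by omega)
        omega
      · rw [← sumFrom_one]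
        have hid : sumFrom (fun j : Fin (k'-1) => x (Fin.castLE hKlt.le j)) 1
            + sumFrom x (k' - 1 + 1) = sumFrom x 1 := sumFrom_trunc hKlt.le x (by omega)
        rw [show k' - 1 + 1 = k' by omega] at hid
        have hx1 : sumFrom x 1 = ∑ ℓ, x ℓ := sumFrom_one x
        omega
  · rintro ⟨h1, h2, h3, h4⟩
    have hzero : ∀ r, (∀ j : Fin k, j.val + 1 < r → x j = 0) → sumFrom x r = sumFrom x 1 := by
      intro r hz
      unfold sumFrom
      apply Finset.sum_congr rfl
      intro i _
      by_cases hc : r ≤ i.val + 1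
      · rw [if_pos hc, if_pos (by omega)]
      · rw [if_neg hc, if_pos (by omega), hz i (by omega)]
    constructor
    · constructor
      · intro k' hk'1 hk'k
        have hx1 : sumFrom x 1 = ∑ ℓ, x ℓ := sumFrom_one x
        by_cases hc : k' + ∑ j, x j ≤ k + 1
        · have h5 := sumFrom_le_total x k'
          omega
        · have := h4 k' (by omega) hk'k
          omega
      · exact h1
    · intro k' hk'k hmem
      obtain ⟨hyA, hyB⟩ := hmem
      rw [← sumFrom_one] at hyB
      by_cases hc : k' + ∑ j, x j ≤ k
      · -- the truncation has zero sum
        have hz : sumFrom x (k' + 1) = sumFrom x 1 := by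
          apply hzero
          intro j hj
          exact h3 j (by omega)
        have hid : sumFrom (fun j : Fin k' => x (Fin.castLE hk'k.le j)) 1
            + sumFrom x (k' + 1) = sumFrom x 1 := sumFrom_trunc hk'k.le x (by omega)
        omega
      · -- the truncation violates the constraint at j = k + 1 - ∑ x
        set t0 := ∑ j, x j with ht0
        have hj1 : 1 ≤ k + 1 - t0 := by omega
        have hjk' : k + 1 - t0 ≤ k' := by omega
        have hxj : sumFrom x (k + 1 - t0) = sumFrom x 1 := by
          apply hzero
          intro j hj
          exact h3 j (by omega)
        have hid : sumFrom (fun j : Fin k' => x (Fin.castLE hk'k.le j)) (k + 1 - t0)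
            + sumFrom x (k' + 1) = sumFrom x (k + 1 - t0) := sumFrom_trunc hk'k.le x (by omega)
        have hid1 : sumFrom (fun j : Fin k' => x (Fin.castLE hk'k.le j)) 1
            + sumFrom x (k' + 1) = sumFrom x 1 := sumFrom_trunc hk'k.le x (by omega)
        have hA' := hyA (k + 1 - t0) hj1 hjk'
        have hb := h4 (k' + 1) (by omega) (by omega)
        rw [sumFrom_one] at hxj hid1
        omega

lemma sumFrom_eq_total {k : ℕ} (x : Fin k → ℕ) (r : ℕ)
    (hz : ∀ j : Fin k, j.val + 1 < r → x j = 0) : sumFrom x r = ∑ ℓ, x ℓ := by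
  unfold sumFrom
  apply Finset.sum_congr rfl
  intro i _
  by_cases hc : r ≤ i.val + 1
  · rw [if_pos hc]
  · rw [if_neg hc, hz i (by omega)]

lemma XiHat_finite (k : ℕ) : (XiHat k).Finite := by
  apply Set.Finite.subset (Set.Finite.pi (fun _ : Fin k => Set.finite_Iic k))
  intro b hb
  simp only [Set.mem_pi, Set.mem_univ, Set.mem_Iic, forall_true_left]
  intro j
  rcases Nat.eq_zero_or_pos k with rfl | hk
  · exact absurd j.isLt (by omega)
  · have h1 := hb.1 1 le_rfl hk
    have h2 : b j ≤ ∑ ℓ, b ℓ :=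
      Finset.single_le_sum (fun i _ => Nat.zero_le (b i)) (Finset.mem_univ j)
    have hx1 := sumFrom_one b
    omega

lemma Xi_finite (k : ℕ) : (Xi k).Finite := (XiHat_finite k).subset (fun _ h => h.1)

lemma XiPlus_finite (k : ℕ) : (XiPlus k).Finite := (XiHat_finite k).subset (fun _ h => h.1)

/-- The largest `k'` with `sumFrom b k' + k' = k + 1`. -/
def kstar {k : ℕ} (b : Fin k → ℕ) : ℕ :=
  Nat.findGreatest (fun k' => sumFrom b k' + k' = k + 1) k

/-- Zero out all entries below position `kstar b`. -/
def phi {k : ℕ} (b : Fin k → ℕ) : Fin k → ℕ :=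
  fun j => if kstar b ≤ j.val + 1 then b j else 0

section kstar
variable {k : ℕ} (b : Fin k → ℕ)

lemma sumFrom_phi_low {k' : ℕ} (h : k' ≤ kstar b) : sumFrom (phi b) k' = sumFrom b (kstar b) := by
  unfold sumFrom phi
  apply Finset.sum_congr rfl
  intro i _
  split_ifs <;> omega

lemma sumFrom_phi_high {k' : ℕ} (h : kstar b ≤ k') : sumFrom (phi b) k' = sumFrom b k' := by
  unfold sumFrom phi
  apply Finset.sum_congr rfl
  intro i _
  split_ifs <;> omega

lemma sum_phi : ∑ j, phi b j = sumFrom b (kstar b) := by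
  rcases Nat.lt_or_ge (kstar b) 1 with h | h
  · have h0 : kstar b = 0 := by omega
    rw [← sumFrom_one (phi b), sumFrom_phi_high b (by omega), h0]
    unfold sumFrom
    apply Finset.sum_congr rfl
    intro i _
    simp
  · rw [← sumFrom_one (phi b), sumFrom_phi_low b h]

end kstar

lemma kstar_spec {k : ℕ} (hk : 1 ≤ k) {b : Fin k → ℕ} (hb : b ∈ XiPlus k) :
    1 ≤ kstar b ∧ kstar b ≤ k ∧ sumFrom b (kstar b) + kstar b = k + 1 := by
  obtain ⟨⟨hA, hB⟩, hsum⟩ := hb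
  have hP1 : sumFrom b 1 + 1 = k + 1 := by rw [sumFrom_one]; omega
  unfold kstar
  exact ⟨Nat.le_findGreatest (P := fun k' => sumFrom b k' + k' = k + 1) hk hP1,
    Nat.findGreatest_le k,
    Nat.findGreatest_spec (P := fun k' => sumFrom b k' + k' = k + 1) hk hP1⟩

lemma kstar_max {k : ℕ} {b : Fin k → ℕ} {k' : ℕ} (h1 : kstar b < k') (h2 : k' ≤ k) :
    sumFrom b k' + k' ≠ k + 1 :=
  Nat.findGreatest_is_greatest (P := fun k' => sumFrom b k' + k' = k + 1) h1 h2

lemma phi_mem_Xi {k : ℕ} (hk : 1 ≤ k) {b : Fin k → ℕ} (hb : b ∈ XiPlus k) : phi b ∈ Xi k := by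
  obtain ⟨h1, h2, h3⟩ := kstar_spec hk hb
  obtain ⟨⟨hA, hB⟩, hsum⟩ := hb
  rw [Xi_iff_struct]
  have hsphi : ∑ j, phi b j = sumFrom b (kstar b) := sum_phi b
  refine ⟨by omega, by omega, ?_, ?_⟩
  · intro j hj
    unfold phi
    rw [if_neg (by omega)]
  · intro k' hk' hk'k
    rw [sumFrom_phi_high b (by omega)]
    have hup := hA k' (by omega) hk'k
    have hne := kstar_max (b := b) (k' := k') (by omega) hk'k
    omega

lemma kstar_of_Xi {k : ℕ} {x : Fin k → ℕ} (hx : x ∈ Xi k) :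
    kstar x = k + 1 - ∑ j, x j ∧ phi x = x := by
  rw [Xi_iff_struct] at hx
  obtain ⟨h1, h2, h3, h4⟩ := hx
  have hge : sumFrom x (k + 1 - ∑ j, x j) = ∑ ℓ, x ℓ :=
    sumFrom_eq_total x _ (fun j hj => h3 j (by omega))
  have hP : sumFrom x (k + 1 - ∑ j, x j) + (k + 1 - ∑ j, x j) = k + 1 := by omega
  have hle1 : k + 1 - ∑ j, x j ≤ k := by omega
  have hk1 : k + 1 - ∑ j, x j ≤ kstar x :=
    Nat.le_findGreatest (P := fun k' => sumFrom x k' + k' = k + 1) hle1 hP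
  have hk2 : kstar x ≤ k := Nat.findGreatest_le k
  have hspec : sumFrom x (kstar x) + kstar x = k + 1 :=
    Nat.findGreatest_spec (P := fun k' => sumFrom x k' + k' = k + 1) hle1 hP
  have heq : kstar x = k + 1 - ∑ j, x j := by
    by_contra hne
    have hgt : k + 2 ≤ kstar x + ∑ j, x j := by omega
    have := h4 (kstar x) hgt hk2
    omega
  refine ⟨heq, ?_⟩
  funext j
  unfold phi
  by_cases hc : kstar x ≤ j.val + 1
  · rw [if_pos hc]
  · rw [if_neg hc, h3 j (by omega)]

lemma mem_XiPlus_trunc {k n : ℕ} (hn1 : 1 ≤ n) (hle : n ≤ k) {b : Fin k → ℕ}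
    (hA : ∀ k', 1 ≤ k' → k' ≤ k → sumFrom b k' + k' ≤ k + 1)
    (hS : sumFrom b (n + 1) + n = k) (hT : ∑ j, b j = k) :
    (fun i : Fin n => b (Fin.castLE hle i)) ∈ XiPlus n := by
  have hsum : ∑ i, (fun i : Fin n => b (Fin.castLE hle i)) i = n := by
    have hid := sumFrom_trunc hle b (j := 1) (by omega)
    have hx1 : sumFrom b 1 = ∑ j, b j := sumFrom_one b
    rw [← sumFrom_one]
    omega
  refine ⟨⟨?_, by omega⟩, hsum⟩
  intro j hj1 hjn
  have hid := sumFrom_trunc hle b (j := j) (by omega)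
  have := hA j hj1 (by omega)
  omega

/-- Glue a bottom part `c` (of length `n`) with a top part `x`. -/
def glue {k n : ℕ} (x : Fin k → ℕ) (c : Fin n → ℕ) : Fin k → ℕ :=
  fun j => if h : j.val < n then c ⟨j.val, h⟩ else x j

lemma glue_trunc {k n : ℕ} (hle : n ≤ k) (x : Fin k → ℕ) (c : Fin n → ℕ) :
    (fun i : Fin n => glue x c (Fin.castLE hle i)) = c := by
  funext i
  unfold glue
  rw [dif_pos (show (Fin.castLE hle i).val < n from i.isLt)]
  exact congrArg c (Fin.ext rfl)

lemma sumFrom_glue_high {k n : ℕ} (x : Fin k → ℕ) (c : Fin n → ℕ) {k' : ℕ} (h : n + 1 ≤ k') :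
    sumFrom (glue x c) k' = sumFrom x k' := by
  unfold sumFrom glue
  apply Finset.sum_congr rfl
  intro i _
  by_cases hc : k' ≤ i.val + 1
  · rw [if_pos hc, if_pos hc, dif_neg (by omega)]
  · rw [if_neg hc, if_neg hc]

lemma glue_mem {k : ℕ} {x : Fin k → ℕ} (hx : x ∈ Xi k) {c : Fin (k - ∑ j, x j) → ℕ}
    (hc : c ∈ XiPlus (k - ∑ j, x j)) :
    glue x c ∈ XiPlus k ∧ phi (glue x c) = x := by
  have hxs := hx
  rw [Xi_iff_struct] at hxs
  obtain ⟨h1, h2, h3, h4⟩ := hxs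
  have hle : k - ∑ j, x j ≤ k := by omega
  obtain ⟨⟨hcA, hcB⟩, hcS⟩ := hc
  have hn1 : 1 ≤ k - ∑ j, x j := by omega
  have htop : sumFrom x (k - ∑ j, x j + 1) = ∑ ℓ, x ℓ :=
    sumFrom_eq_total x (k - ∑ j, x j + 1) (fun j hj => h3 j (by omega))
  have hsg : sumFrom (glue x c) (k - ∑ j, x j + 1) = ∑ j, x j := by
    rw [sumFrom_glue_high x c le_rfl, htop]
  have hcS' : sumFrom c 1 = k - ∑ j, x j := by rw [sumFrom_one]; exact hcS
  have hid : ∀ j : ℕ, j ≤ k - ∑ j, x j + 1 →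
      sumFrom c j + sumFrom (glue x c) (k - ∑ j, x j + 1) = sumFrom (glue x c) j := by
    intro j hj
    have := sumFrom_trunc hle (glue x c) (j := j) hj
    rwa [glue_trunc hle x c] at this
  have hsum : ∑ j, glue x c j = k := by
    rw [← sumFrom_one]
    have := hid 1 (by omega)
    omega
  have hXiHat : glue x c ∈ XiHat k := by
    constructor
    · intro k' h1' h2'
      by_cases hca : k' ≤ k - ∑ j, x j
      · have := hid k' (by omega)
        have := hcA k' h1' hca
        omega
      · by_cases hcb : k' = k - ∑ j, x j + 1
        · rw [hcb, hsg]; omega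
        · rw [sumFrom_glue_high x c (by omega)]
          have := h4 k' (by omega) h2'
          omega
    · rw [← sumFrom_one]
      have := hid 1 (by omega)
      omega
  refine ⟨⟨hXiHat, hsum⟩, ?_⟩
  have hkst : kstar (glue x c) = k - ∑ j, x j + 1 := by
    have hP : sumFrom (glue x c) (k - ∑ j, x j + 1) + (k - ∑ j, x j + 1) = k + 1 := by omega
    have hle1 : k - ∑ j, x j + 1 ≤ k := by omega
    have hk1 : k - ∑ j, x j + 1 ≤ kstar (glue x c) :=
      Nat.le_findGreatest (P := fun k' => sumFrom (glue x c) k' + k' = k + 1) hle1 hP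
    have hk2 : kstar (glue x c) ≤ k := Nat.findGreatest_le k
    have hspec : sumFrom (glue x c) (kstar (glue x c)) + kstar (glue x c) = k + 1 :=
      Nat.findGreatest_spec (P := fun k' => sumFrom (glue x c) k' + k' = k + 1) hle1 hP
    by_contra hne
    have hgt : k - ∑ j, x j + 2 ≤ kstar (glue x c) := by omega
    rw [sumFrom_glue_high x c (by omega)] at hspec
    have := h4 (kstar (glue x c)) (by omega) hk2
    omega
  funext j
  unfold phi
  rw [hkst]
  by_cases hcj : j.val < k - ∑ j, x j
  · rw [if_neg (by omega), h3 j (by omega)]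
  · rw [if_pos (by omega)]
    unfold glue
    rw [dif_neg hcj]

lemma fiber_eq_glue {k : ℕ} (hk : 1 ≤ k) {x b : Fin k → ℕ} (hx : x ∈ Xi k)
    (hb : b ∈ XiPlus k) (hphib : phi b = x) (hle : k - ∑ j, x j ≤ k) :
    kstar b = k - ∑ j, x j + 1 ∧
      b = glue x (fun i : Fin (k - ∑ j, x j) => b (Fin.castLE hle i)) := by
  obtain ⟨hk1, hk2, hk3⟩ := kstar_spec hk hb
  have hx1 : 1 ≤ ∑ j, x j ∧ ∑ j, x j ≤ k := by
    rw [Xi_iff_struct] at hx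
    exact ⟨hx.1, hx.2.1⟩
  have hsx : ∑ j, x j = sumFrom b (kstar b) := by
    rw [← hphib]
    exact sum_phi b
  have hkst : kstar b = k - ∑ j, x j + 1 := by omega
  refine ⟨hkst, ?_⟩
  funext j
  unfold glue
  by_cases hcj : j.val < k - ∑ j, x j
  · rw [dif_pos hcj]
    exact (congrArg b (Fin.ext rfl)).symm
  · rw [dif_neg hcj, ← hphib]
    unfold phi
    rw [if_pos (by omega)]

lemma wt_glue (lam : ℕ → ℝ) {k n : ℕ} (hle : n ≤ k) (x : Fin k → ℕ)
    (hz : ∀ j : Fin k, j.val < n → x j = 0) (c : Fin n → ℕ) :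
    (∏ j : Fin k, lam (j.val + 1) ^ (glue x c j) / (Nat.factorial (glue x c j))) =
    (∏ j : Fin k, lam (j.val + 1) ^ (x j) / (Nat.factorial (x j))) *
    ∏ i : Fin n, lam (i.val + 1) ^ (c i) / (Nat.factorial (c i)) := by
  classical
  rw [← Finset.prod_filter_mul_prod_filter_not Finset.univ (fun j : Fin k => j.val < n)
    (fun j => lam (j.val + 1) ^ (glue x c j) / (Nat.factorial (glue x c j)))]
  rw [← Finset.prod_filter_mul_prod_filter_not Finset.univ (fun j : Fin k => j.val < n)
    (fun j => lam (j.val + 1) ^ (x j) / (Nat.factorial (x j)))]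
  have hx_low : (∏ j ∈ Finset.univ.filter (fun j : Fin k => j.val < n),
      lam (j.val + 1) ^ (x j) / (Nat.factorial (x j))) = 1 := by
    apply Finset.prod_eq_one
    intro j hj
    rw [Finset.mem_filter] at hj
    rw [hz j hj.2]
    simp
  have hglue_high : (∏ j ∈ Finset.univ.filter (fun j : Fin k => ¬ j.val < n),
      lam (j.val + 1) ^ (glue x c j) / (Nat.factorial (glue x c j))) =
      ∏ j ∈ Finset.univ.filter (fun j : Fin k => ¬ j.val < n),
      lam (j.val + 1) ^ (x j) / (Nat.factorial (x j)) := by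
    apply Finset.prod_congr rfl
    intro j hj
    rw [Finset.mem_filter] at hj
    unfold glue
    rw [dif_neg hj.2]
  have hglue_low : (∏ j ∈ Finset.univ.filter (fun j : Fin k => j.val < n),
      lam (j.val + 1) ^ (glue x c j) / (Nat.factorial (glue x c j))) =
      ∏ i : Fin n, lam (i.val + 1) ^ (c i) / (Nat.factorial (c i)) := by
    rcases Nat.eq_zero_or_pos n with rfl | hn
    · rw [Finset.prod_eq_one, Finset.prod_eq_one]
      · intro i _; exact absurd i.isLt (by omega)
      · intro j hj; rw [Finset.mem_filter] at hj; exact absurd hj.2 (by omega)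
    · symm
      apply Finset.prod_nbij' (i := fun i : Fin n => Fin.castLE hle i)
        (j := fun ℓ : Fin k => (⟨min ℓ.val (n - 1), by omega⟩ : Fin n))
      · intro a _
        simp only [Finset.mem_filter, Finset.mem_univ, true_and, Fin.coe_castLE]
        exact a.isLt
      · intro a _; exact Finset.mem_univ _
      · intro a _; apply Fin.ext; have := a.isLt; simp [Fin.castLE]; omega
      · intro a ha; simp only [Finset.mem_filter, Finset.mem_univ, true_and] at ha
        apply Fin.ext; simp [Fin.castLE]; omega
      · intro a _
        unfold glue
        rw [dif_pos (show (Fin.castLE hle a).val < n from a.isLt)]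
        simp only [Fin.coe_castLE]
  rw [hglue_low, hglue_high, hx_low, one_mul]
  ring

/-- If `(λ_1,…,λ_m)` solves the equation system, then for every `k ∈ {1,…,m}`
the sum over `Ξ_k⁺` of `∏_j λ_j^{b_j}/b_j!` equals `1`. -/
theorem sum_XiPlus_eq_one (m : ℕ) (lam : ℕ → ℝ) (h : eqSystem m lam) :
    ∀ k, 1 ≤ k → k ≤ m →
      ∑ᶠ b ∈ XiPlus k,
        ∏ j : Fin k, lam (j.val + 1) ^ (b j) / (Nat.factorial (b j)) = 1 := by
  intro k
  induction k using Nat.strong_induction_on with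
  | _ k ih =>
  intro hk1 hkm
  classical
  rw [finsum_mem_eq_finite_toFinset_sum _ (XiPlus_finite k)]
  have hXi := h k hk1 hkm
  rw [finsum_mem_eq_finite_toFinset_sum _ (Xi_finite k)] at hXi
  rw [← Finset.sum_fiberwise_of_maps_to (g := phi) (t := (Xi_finite k).toFinset)
      (fun b hb => by
        rw [Set.Finite.mem_toFinset] at hb ⊢
        exact phi_mem_Xi hk1 hb)
      (fun b => ∏ j : Fin k, lam (j.val + 1) ^ (b j) / (Nat.factorial (b j)))]
  rw [← hXi]
  apply Finset.sum_congr rfl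
  intro x hxX
  rw [Set.Finite.mem_toFinset] at hxX
  have hxs := hxX
  rw [Xi_iff_struct] at hxs
  obtain ⟨hs1, hs2, hs3, hs4⟩ := hxs
  by_cases hsx : ∑ j, x j = k
  · -- singleton fiber
    have hfe : ((XiPlus_finite k).toFinset.filter (fun b => phi b = x)) = {x} := by
      ext b
      rw [Finset.mem_filter, Finset.mem_singleton, Set.Finite.mem_toFinset]
      constructor
      · rintro ⟨hbA, hphib⟩
        obtain ⟨hk1', hk2', hk3'⟩ := kstar_spec hk1 hbA
        have hsx2 : ∑ j, phi b j = sumFrom b (kstar b) := sum_phi b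
        rw [hphib] at hsx2
        have hks1 : kstar b = 1 := by omega
        rw [← hphib]
        funext j
        unfold phi
        rw [if_pos (by omega)]
      · rintro rfl
        obtain ⟨hκ, hφ⟩ := kstar_of_Xi hxX
        exact ⟨⟨hxX.1, hsx⟩, hφ⟩
    rw [hfe, Finset.sum_singleton]
  · -- fiber in bijection with XiPlus (k - ∑ x)
    have hn1 : 1 ≤ k - ∑ j, x j := by omega
    have hnk : k - ∑ j, x j < k := by omega
    have hle : k - ∑ j, x j ≤ k := by omega
    have hS := ih (k - ∑ j, x j) hnk hn1 (by omega)
    rw [finsum_mem_eq_finite_toFinset_sum _ (XiPlus_finite (k - ∑ j, x j))] at hS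
    have hbij : (∑ b ∈ (XiPlus_finite k).toFinset.filter (fun b => phi b = x),
        ∏ j : Fin k, lam (j.val + 1) ^ (b j) / (Nat.factorial (b j))) =
        ∑ c ∈ (XiPlus_finite (k - ∑ j, x j)).toFinset,
          (∏ j : Fin k, lam (j.val + 1) ^ (x j) / (Nat.factorial (x j))) *
          ∏ i : Fin (k - ∑ j, x j), lam (i.val + 1) ^ (c i) / (Nat.factorial (c i)) := by
      apply Finset.sum_nbij' (i := fun b => (fun i : Fin (k - ∑ j, x j) => b (Fin.castLE hle i)))
        (j := fun c => glue x c)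
      · intro b hb
        rw [Finset.mem_filter, Set.Finite.mem_toFinset] at hb
        obtain ⟨hbA, hphib⟩ := hb
        rw [Set.Finite.mem_toFinset]
        obtain ⟨hkst, hglue⟩ := fiber_eq_glue hk1 hxX hbA hphib hle
        obtain ⟨hb1, hb2, hb3⟩ := kstar_spec hk1 hbA
        apply mem_XiPlus_trunc hn1 hle hbA.1.1
        · rw [← hkst]; omega
        · exact hbA.2
      · intro c hc
        rw [Set.Finite.mem_toFinset] at hc
        rw [Finset.mem_filter, Set.Finite.mem_toFinset]
        obtain ⟨hmem, hphi⟩ := glue_mem hxX hc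
        exact ⟨hmem, hphi⟩
      · intro b hb
        rw [Finset.mem_filter, Set.Finite.mem_toFinset] at hb
        obtain ⟨hbA, hphib⟩ := hb
        exact (fiber_eq_glue hk1 hxX hbA hphib hle).2.symm
      · intro c hc
        exact glue_trunc hle x c
      · intro b hb
        rw [Finset.mem_filter, Set.Finite.mem_toFinset] at hb
        obtain ⟨hbA, hphib⟩ := hb
        have hglue := (fiber_eq_glue hk1 hxX hbA hphib hle).2
        conv_lhs => rw [hglue]
        exact wt_glue lam hle x (fun j hj => hs3 j (by omega)) _
    rw [hbij, ← Finset.mul_sum, hS, mul_one]
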